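/- Let f̂ : Û → P*(S^(n)), Û ∈ P*(S^(m)), be a system satisfying: (i) Û ⊆ S₀^(m); (ii) for all u ∈ Û, f̂(u) ⊆ S₀^(n); (iii) for all d ∈ ℝ, u ∈ Û and x, if x ∈ f̂(u) and u∘τ^d ∈ Û then x∘τ^d ∈ f̂(u∘τ^d); and suppose f̂ is non-anticipatory in the first sense. Define U = {u∘τ^d : d ∈ ℝ, u ∈ Û} and f : U → P*(S^(n)) by f(u∘τ^d) = {x∘τ^d : x ∈ f̂(u)}. Then f is non-anticipatory in the first sense. -/

import Mathlib

open Set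
open scoped Classical

/-- `B^n`, the set of binary vectors of length `n`. -/
abbrev BV (n : ℕ) := Fin n → Bool

/-- `x : ℝ → α` is a signal: it has an initial value and a strictly increasing,
unbounded-from-above sequence of time instants on whose half-open intervals it is constant. -/
def IsSignal {α : Type*} (x : ℝ → α) : Prop :=
  ∃ (a : α) (t : ℕ → ℝ), StrictMono t ∧ (∀ M : ℝ, ∃ k, M < t k) ∧
    (∀ s, s < t 0 → x s = a) ∧
    (∀ k : ℕ, ∀ s, t k ≤ s → s < t (k + 1) → x s = x (t k))

/-- The set of signals with values in `α`. -/
def Sig (α : Type*) : Set (ℝ → α) := {x | IsSignal x}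

/-- The left limit `x(t-0)`: the common value of `x` on `(t-ε, t)` for small `ε > 0`
(junk value `x t` if no such common value exists). -/
noncomputable def leftLim {α : Type*} (x : ℝ → α) (t : ℝ) : α :=
  if h : ∃ v, ∃ ε, 0 < ε ∧ ∀ s, t - ε < s → s < t → x s = v then h.choose else x t

/-- A constant signal. -/
def IsConstantSig {α : Type*} (x : ℝ → α) : Prop := ∀ s t : ℝ, x s = x t

/-- The first switch time `min {t | x(t-0) ≠ x(t)}` (for a variable signal the
infimum is attained, so it is the minimum). -/
noncomputable def firstSwitch {α : Type*} (x : ℝ → α) : ℝ :=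
  sInf {t | leftLim x t ≠ x t}

/-- Non-anticipation in the first sense: every state is constant, or the input and the
state are both variable and the first input switch is prior to the first state switch. -/
def NonAnticip1 {α β : Type*} (U : Set (ℝ → α)) (f : (ℝ → α) → Set (ℝ → β)) : Prop :=
  ∀ u ∈ U, ∀ x ∈ f u, IsConstantSig x ∨
    (¬ IsConstantSig u ∧ ¬ IsConstantSig x ∧ firstSwitch u ≤ firstSwitch x)

/-- The translation `x ∘ τ^d`, `(x ∘ τ^d)(t) = x(t - d)`. -/
def tr {α : Type*} (d : ℝ) (x : ℝ → α) : ℝ → α := fun t => x (t - d)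

/-- `S₀`: the signals that are constant (equal to their initial value) on `(-∞, 0)`. -/
def Sig0 (α : Type*) : Set (ℝ → α) :=
  {u | IsSignal u ∧ ∀ s, s < (0:ℝ) → ∀ t', t' < (0:ℝ) → u s = u t'}

/-- Time invariance of the system `f` with input set `U`. -/
def TimeInv {α β : Type*} (U : Set (ℝ → α)) (f : (ℝ → α) → Set (ℝ → β)) : Prop :=
  ∀ d : ℝ, ∀ u ∈ U, tr d u ∈ U ∧ ∀ x ∈ f u, tr d x ∈ f (tr d u)

/-- `f : U → P*(S^(n))` is an asynchronous system: `U` is a nonempty set of signals and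
each set of states `f u`, `u ∈ U`, is a nonempty set of signals. -/
def IsSystem {α β : Type*} (U : Set (ℝ → α)) (f : (ℝ → α) → Set (ℝ → β)) : Prop :=
  U.Nonempty ∧ U ⊆ Sig α ∧ ∀ u ∈ U, (f u).Nonempty ∧ f u ⊆ Sig β

/-- Non-anticipation in the second sense: if two inputs coincide on `(-∞, t)`, then the
sets of restrictions of the states to `(-∞, t]` coincide. -/
def NonAnticip2 {α β : Type*} (U : Set (ℝ → α)) (f : (ℝ → α) → Set (ℝ → β)) : Prop :=
  ∀ t : ℝ, ∀ u ∈ U, ∀ v ∈ U, EqOn u v (Iio t) →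
    ((fun x => (Iic t).restrict x) '' f u) = ((fun x => (Iic t).restrict x) '' f v)

/-- If `x` is eventually equal to `v` on a left interval of `t`, the left limit is `v`. -/
lemma leftLim_eq_of {α : Type*} (x : ℝ → α) (t : ℝ) (v : α) (ε : ℝ) (hε : 0 < ε)
    (hv : ∀ s, t - ε < s → s < t → x s = v) : leftLim x t = v := by
  have h : ∃ v, ∃ ε, 0 < ε ∧ ∀ s, t - ε < s → s < t → x s = v := ⟨v, ε, hε, hv⟩
  rw [leftLim, dif_pos h]
  obtain ⟨ε', hε', hv'⟩ := h.choose_spec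
  set s := t - min ε ε' / 2 with hs
  have hmin : 0 < min ε ε' := lt_min hε hε'
  have hst : s < t := by rw [hs]; linarith
  have h1 : t - ε < s := by
    have : min ε ε' ≤ ε := min_le_left _ _
    simp only [hs]; linarith
  have h2 : t - ε' < s := by
    have : min ε ε' ≤ ε' := min_le_right _ _
    simp only [hs]; linarith
  rw [← hv' s h2 hst, hv s h1 hst]

/-- The left limit of a translated signal. -/
lemma leftLim_tr {α : Type*} (x : ℝ → α) (d t : ℝ) :
    leftLim (tr d x) t = leftLim x (t - d) := by
  by_cases h : ∃ v, ∃ ε, 0 < ε ∧ ∀ s, t - ε < s → s < t → tr d x s = v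
  · obtain ⟨v, ε, hε, hv⟩ := h
    rw [leftLim_eq_of (tr d x) t v ε hε hv]
    refine (leftLim_eq_of x (t - d) v ε hε ?_).symm
    intro s h1 h2
    have := hv (s + d) (by linarith) (by linarith)
    simpa [tr] using this
  · have h' : ¬ ∃ v, ∃ ε, 0 < ε ∧ ∀ s, (t - d) - ε < s → s < t - d → x s = v := by
      intro ⟨v, ε, hε, hv⟩
      exact h ⟨v, ε, hε, fun s h1 h2 => hv (s - d) (by linarith) (by linarith)⟩
    rw [leftLim, dif_neg h, leftLim, dif_neg h']
    rfl

/-- Constancy is preserved by translation (both directions). -/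
lemma isConstantSig_tr_iff {α : Type*} (x : ℝ → α) (d : ℝ) :
    IsConstantSig (tr d x) ↔ IsConstantSig x := by
  constructor
  · intro h s t
    have := h (s + d) (t + d)
    simpa [tr] using this
  · intro h s t
    exact h _ _

/-- A signal with no switch time is constant. -/
lemma isConstantSig_of_no_switch {α : Type*} (x : ℝ → α) (hsig : IsSignal x)
    (hall : ∀ t, leftLim x t = x t) : IsConstantSig x := by
  obtain ⟨a, t, hmono, hub, hbefore, hstep⟩ := hsig
  have hk : ∀ k, x (t k) = a := by
    intro k
    induction k with
    | zero =>
      have : leftLim x (t 0) = a := by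
        refine leftLim_eq_of x (t 0) a 1 one_pos fun s _ hs => hbefore s hs
      rw [← hall (t 0), this]
    | succ k ih =>
      have hlt : t k < t (k + 1) := hmono (Nat.lt_succ_self k)
      have : leftLim x (t (k + 1)) = x (t k) := by
        refine leftLim_eq_of x (t (k + 1)) (x (t k)) (t (k + 1) - t k) (by linarith) ?_
        intro s h1 h2
        exact hstep k s (by linarith) h2
      rw [← hall (t (k + 1)), this, ih]
  have hall' : ∀ s, x s = a := by
    intro s
    by_cases hs : s < t 0
    · exact hbefore s hs
    · push_neg at hs
      obtain ⟨j, hj⟩ := hub s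
      have hex : ∃ k, t k ≤ s ∧ s < t (k + 1) := by
        by_contra hc
        push_neg at hc
        have : ∀ k, t k ≤ s := by
          intro k
          induction k with
          | zero => exact hs
          | succ k ih => exact hc k ih
        exact absurd (this j) (not_le.mpr hj)
      obtain ⟨k, hk1, hk2⟩ := hex
      rw [hstep k s hk1 hk2, hk k]
  intro s t'
  rw [hall' s, hall' t']

/-- A variable signal has a nonempty switch set. -/
lemma switchSet_nonempty {α : Type*} (x : ℝ → α) (hsig : IsSignal x)
    (hvar : ¬ IsConstantSig x) : {t | leftLim x t ≠ x t}.Nonempty := by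
  by_contra h
  rw [Set.not_nonempty_iff_eq_empty] at h
  refine hvar (isConstantSig_of_no_switch x hsig fun t => ?_)
  by_contra hne
  exact Set.eq_empty_iff_forall_notMem.mp h t hne

/-- For a `Sig0` signal, the switch set is contained in `[0, ∞)`. -/
lemma switchSet_bddBelow {α : Type*} (x : ℝ → α) (hx : x ∈ Sig0 α) :
    {t | leftLim x t ≠ x t} ⊆ Set.Ici (0 : ℝ) := by
  intro t ht
  by_contra h
  try push_neg at h
  simp only [Set.mem_Ici, not_le] at h
  refine ht (leftLim_eq_of x t (x t) 1 one_pos fun s h1 h2 => ?_)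
  exact hx.2 s (lt_trans h2 h) t h

/-- The switch set of a translated signal is the translated switch set. -/
lemma switchSet_tr {α : Type*} (x : ℝ → α) (d : ℝ) :
    {t | leftLim (tr d x) t ≠ tr d x t} = (fun s => s + d) '' {t | leftLim x t ≠ x t} := by
  ext t
  simp only [Set.mem_setOf_eq, Set.mem_image, leftLim_tr]
  constructor
  · intro h
    exact ⟨t - d, h, by ring⟩
  · rintro ⟨s, hs, rfl⟩
    simpa [tr] using hs

/-- sInf of a shifted nonempty bounded-below set. -/
lemma sInf_shift (A : Set ℝ) (hA : A.Nonempty) (hb : BddBelow A) (d : ℝ) :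
    sInf ((fun s => s + d) '' A) = sInf A + d := by
  obtain ⟨c, hc⟩ := hb
  have hbimg : BddBelow ((fun s => s + d) '' A) := by
    refine ⟨c + d, ?_⟩
    rintro _ ⟨a, ha, rfl⟩
    exact add_le_add_left (hc ha) d
  apply le_antisymm
  · have h1 : sInf ((fun s => s + d) '' A) - d ≤ sInf A := by
      refine le_csInf hA fun a ha => ?_
      have : sInf ((fun s => s + d) '' A) ≤ a + d := csInf_le hbimg ⟨a, ha, rfl⟩
      linarith
    linarith
  · refine le_csInf (hA.image _) ?_
    rintro _ ⟨a, ha, rfl⟩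
    exact add_le_add_left (csInf_le ⟨c, hc⟩ ha) d

/-- First switch time of a translated variable `Sig0` signal. -/
lemma firstSwitch_tr {α : Type*} (x : ℝ → α) (d : ℝ) (hx : x ∈ Sig0 α)
    (hvar : ¬ IsConstantSig x) : firstSwitch (tr d x) = firstSwitch x + d := by
  unfold firstSwitch
  rw [switchSet_tr]
  exact sInf_shift _ (switchSet_nonempty x hx.1 hvar)
    (BddBelow.mono (switchSet_bddBelow x hx) bddBelow_Ici) d

/-- under properties (i), (ii), (iii) and non-anticipation (first sense) of
`f̂`, the extended system `f : U → P*(S^(n))`, `U = {u ∘ τ^d | d ∈ ℝ, u ∈ Û}`,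
`f(u ∘ τ^d) = {x ∘ τ^d | x ∈ f̂(u)}`, is non-anticipatory in the first sense. -/
theorem extended_system_nonAnticip1 {m n : ℕ}
    (Uhat : Set (ℝ → BV m)) (fhat : (ℝ → BV m) → Set (ℝ → BV n))
    (hsys : IsSystem Uhat fhat)
    (h1 : Uhat ⊆ Sig0 (BV m))
    (h2 : ∀ u ∈ Uhat, fhat u ⊆ Sig0 (BV n))
    (h3 : ∀ d : ℝ, ∀ u ∈ Uhat, ∀ x ∈ fhat u, tr d u ∈ Uhat → tr d x ∈ fhat (tr d u))
    (hna : NonAnticip1 Uhat fhat)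
    (Unew : Set (ℝ → BV m))
    (hUnew : Unew = {w | ∃ d : ℝ, ∃ u ∈ Uhat, w = tr d u})
    (fnew : (ℝ → BV m) → Set (ℝ → BV n))
    (hfnew : ∀ d : ℝ, ∀ u ∈ Uhat, fnew (tr d u) = tr d '' fhat u) :
    NonAnticip1 Unew fnew := by
  intro w hw
  rw [hUnew] at hw
  obtain ⟨d, u, hu, rfl⟩ := hw
  intro x' hx'
  rw [hfnew d u hu] at hx'
  obtain ⟨x, hx, rfl⟩ := hx'
  rcases hna u hu x hx with hc | ⟨hu1, hx1, hle⟩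
  · exact Or.inl ((isConstantSig_tr_iff x d).mpr hc)
  · refine Or.inr ⟨fun h => hu1 ((isConstantSig_tr_iff u d).mp h),
      fun h => hx1 ((isConstantSig_tr_iff x d).mp h), ?_⟩
    rw [firstSwitch_tr u d (h1 hu) hu1, firstSwitch_tr x d (h2 u hu hx) hx1]
    linarith
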